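/- Let A_FF be a real symmetric n×n matrix with strictly positive diagonal entries that is η-diagonally dominant for some real η with 1/2 < η ≤ 1; that is, for every index i, A_ii ≥ η·Σ_j |A_ij| (the sum over all j, including j = i). Let D be the diagonal matrix with entries D_ii = (2 - 1/η)·A_ii. Then E := A_FF - D is positive semidefinite. -/

import Mathlib

open Matrix

/-- A symmetric real matrix that is (weakly) diagonally dominant is
positive semidefinite. -/
lemma posSemidef_of_diag_dominant
    {n : Type*} [Fintype n] [DecidableEq n]
    (E : Matrix n n ℝ) (hsym : ∀ i j, E i j = E j i)
    (hdd : ∀ i, ∑ j ∈ Finset.univ.erase i, |E i j| ≤ E i i) :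
    E.PosSemidef := by
  constructor
  · ext i j
    simp [Matrix.conjTranspose_apply, hsym i j]
  · intro x
    have hQ : star x ⬝ᵥ E *ᵥ x = ∑ i, ∑ j, x i * (E i j * x j) := by
      simp [dotProduct, mulVec, Finset.mul_sum]
    have hQ' : (x.sum fun i xi => x.sum fun j xj => star xi * E i j * xj)
        = ∑ i, ∑ j, x i * (E i j * x j) := by
      simp [Finsupp.sum_fintype, mul_assoc]
    rw [hQ']
    set A' : n → ℝ := fun i => ∑ j ∈ Finset.univ.erase i, |E i j| * x i ^ 2 with hA'
    set B' : n → ℝ := fun i => ∑ j ∈ Finset.univ.erase i, |E i j| * x j ^ 2 with hB'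
    -- pointwise bound on off-diagonal terms
    have hT : ∀ i, -((A' i + B' i) / 2) ≤ ∑ j ∈ Finset.univ.erase i, x i * (E i j * x j) := by
      intro i
      have h1 : ∑ j ∈ Finset.univ.erase i, (-((|E i j| * x i ^ 2 + |E i j| * x j ^ 2) / 2))
          ≤ ∑ j ∈ Finset.univ.erase i, x i * (E i j * x j) := by
        refine Finset.sum_le_sum fun j _ => ?_
        have habs : |x i * (E i j * x j)| ≤ (|E i j| * x i ^ 2 + |E i j| * x j ^ 2) / 2 := by
          rw [abs_mul, abs_mul]
          nlinarith [sq_nonneg (|x i| - |x j|), abs_nonneg (E i j), abs_nonneg (x i),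
            abs_nonneg (x j), sq_abs (x i), sq_abs (x j),
            mul_nonneg (abs_nonneg (x i)) (abs_nonneg (x j))]
        linarith [neg_abs_le (x i * (E i j * x j))]
      calc -((A' i + B' i) / 2)
          = ∑ j ∈ Finset.univ.erase i, (-((|E i j| * x i ^ 2 + |E i j| * x j ^ 2) / 2)) := by
            rw [hA', hB', ← Finset.sum_add_distrib]
            rw [Finset.sum_neg_distrib, ← Finset.sum_div]
        _ ≤ _ := h1
    -- a rewriting of erased sums as full sums with an `if`
    have eraseq : ∀ (g : n → n → ℝ),
        (∑ i, ∑ j ∈ Finset.univ.erase i, g i j) = ∑ i, ∑ j, if i = j then 0 else g i j := by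
      intro g
      refine Finset.sum_congr rfl fun i _ => ?_
      rw [← Finset.add_sum_erase _ _ (Finset.mem_univ i), if_pos rfl, zero_add]
      refine Finset.sum_congr rfl fun j hj => ?_
      rw [if_neg fun h => (Finset.mem_erase.mp hj).1 h.symm]
    have hswap : ∑ i, B' i = ∑ i, A' i := by
      rw [hA', hB', eraseq, eraseq, Finset.sum_comm]
      refine Finset.sum_congr rfl fun i _ => Finset.sum_congr rfl fun j _ => ?_
      by_cases h : i = j
      · simp [h]
      · have h' : ¬j = i := fun h'' => h h''.symm
        simp only [if_neg h, if_neg h', hsym j i]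
    -- each "row budget" is nonnegative
    have h0 : 0 ≤ ∑ i, (E i i * x i ^ 2 - A' i) := by
      refine Finset.sum_nonneg fun i _ => ?_
      have hAi : A' i = (∑ j ∈ Finset.univ.erase i, |E i j|) * x i ^ 2 := by
        rw [hA', Finset.sum_mul]
      have := mul_le_mul_of_nonneg_right (hdd i) (sq_nonneg (x i))
      rw [← hAi] at this
      linarith
    have hsplit : ∀ i, ∑ j, x i * (E i j * x j)
        = E i i * x i ^ 2 + ∑ j ∈ Finset.univ.erase i, x i * (E i j * x j) := by
      intro i
      rw [← Finset.add_sum_erase _ _ (Finset.mem_univ i)]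
      ring_nf
    calc (0 : ℝ) ≤ ∑ i, (E i i * x i ^ 2 - A' i) := h0
      _ = ∑ i, (E i i * x i ^ 2 - (A' i + B' i) / 2) := by
          rw [Finset.sum_sub_distrib, Finset.sum_sub_distrib]
          congr 1
          rw [← Finset.sum_div, Finset.sum_add_distrib, hswap]
          ring
      _ ≤ ∑ i, (E i i * x i ^ 2 + ∑ j ∈ Finset.univ.erase i, x i * (E i j * x j)) := by
          refine Finset.sum_le_sum fun i _ => ?_
          have := hT i
          linarith
      _ = ∑ i, ∑ j, x i * (E i j * x j) := by
          refine Finset.sum_congr rfl fun i _ => (hsplit i).symm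

/-- If the symmetric matrix `A_FF` with positive diagonal is `η`-diagonally
dominant for some `1/2 < η ≤ 1`, then `E := A_FF - D` with
`D = diagonal ((2 - 1/η) * A_ii)` is positive semidefinite. -/
theorem amgr_lower_bound_posSemidef
    {n : Type*} [Fintype n] [DecidableEq n]
    (A : Matrix n n ℝ) (hsym : Aᵀ = A)
    (hdiag : ∀ i, 0 < A i i)
    (η : ℝ) (hη₁ : 1 / 2 < η) (hη₂ : η ≤ 1)
    (hdd : ∀ i, η * ∑ j, |A i j| ≤ A i i) :
    (A - Matrix.diagonal (fun i => (2 - 1 / η) * A i i)).PosSemidef := by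
  have hη0 : 0 < η := by linarith
  set E := A - Matrix.diagonal (fun i => (2 - 1 / η) * A i i) with hE
  have hEsym : ∀ i j, E i j = E j i := by
    intro i j
    have hAsym : A i j = A j i := congrFun (congrFun hsym j) i
    by_cases h : i = j
    · subst h; rfl
    · simp [hE, Matrix.sub_apply, Matrix.diagonal_apply_ne _ h,
        Matrix.diagonal_apply_ne _ (fun h' => h h'.symm), hAsym]
  refine posSemidef_of_diag_dominant E hEsym ?_
  intro i
  have hoff : ∑ j ∈ Finset.univ.erase i, |E i j| = ∑ j ∈ Finset.univ.erase i, |A i j| := by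
    refine Finset.sum_congr rfl fun j hj => ?_
    have hji : j ≠ i := (Finset.mem_erase.mp hj).1
    simp [hE, Matrix.sub_apply, Matrix.diagonal_apply_ne _ (fun h => hji h.symm)]
  have hEii : E i i = A i i - (2 - 1 / η) * A i i := by
    simp [hE, Matrix.sub_apply]
  rw [hoff, hEii]
  have hfull : ∑ j, |A i j| = A i i + ∑ j ∈ Finset.univ.erase i, |A i j| := by
    rw [← Finset.add_sum_erase _ _ (Finset.mem_univ i), abs_of_pos (hdiag i)]
  have h1 := hdd i
  rw [hfull] at h1
  have h2 : η * ∑ j ∈ Finset.univ.erase i, |A i j| ≤ (1 - η) * A i i := by nlinarith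
  have h3 : η * (1 / η) = 1 := by field_simp
  nlinarith [h2, h3, hη0, hdiag i,
    Finset.sum_nonneg (fun j (_ : j ∈ Finset.univ.erase i) => abs_nonneg (A i j))]
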